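/- Negation distributes over the sequential compound: for all short partizan games G and H, -(G → H) is identical to (-G) → (-H). -/

import Mathlib

universe u

namespace SetTheory

/-- Pre-games, as in Mathlib's former `SetTheory.PGame` (removed from Mathlib). -/
inductive PGame : Type (u + 1)
  | mk : ∀ α β : Type u, (α → PGame) → (β → PGame) → PGame

namespace PGame

def LeftMoves : PGame → Type u
  | mk l _ _ _ => l

def RightMoves : PGame → Type u
  | mk _ r _ _ => r

def moveLeft : ∀ g : PGame, LeftMoves g → PGame
  | mk _l _ L _ => L

def moveRight : ∀ g : PGame, RightMoves g → PGame
  | mk _ _r _ R => R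

instance : Zero PGame := ⟨⟨PEmpty, PEmpty, PEmpty.elim, PEmpty.elim⟩⟩

def Identical : PGame.{u} → PGame.{u} → Prop
  | mk _ _ xL xR, mk _ _ yL yR =>
    Relator.BiTotal (fun i j ↦ Identical (xL i) (yL j)) ∧
      Relator.BiTotal (fun i j ↦ Identical (xR i) (yR j))

infix:50 " ≡ " => PGame.Identical

def neg : PGame → PGame
  | ⟨l, r, L, R⟩ => ⟨r, l, fun i => neg (R i), fun i => neg (L i)⟩

instance : Neg PGame := ⟨neg⟩

/-- Inner recursion (on `y`) of the disjunctive sum `x + y`, `x = mk xl xr xL xR`,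
given the sums `fL i = xL i + ·` and `fR i = xR i + ·`. -/
def addAux (xl xr : Type u) (fL : xl → PGame.{u} → PGame.{u}) (fR : xr → PGame.{u} → PGame.{u}) :
    PGame.{u} → PGame.{u}
  | mk yl yr yL yR =>
    mk (xl ⊕ yl) (xr ⊕ yr)
      (Sum.elim (fun i => fL i (mk yl yr yL yR)) (fun j => addAux xl xr fL fR (yL j)))
      (Sum.elim (fun i => fR i (mk yl yr yL yR)) (fun j => addAux xl xr fL fR (yR j)))

/-- The disjunctive sum of pregames (same recursion as Mathlib's former `PGame` addition). -/
def add : PGame.{u} → PGame.{u} → PGame.{u}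
  | mk xl xr xL xR => addAux xl xr (fun i => add (xL i)) (fun i => add (xR i))

instance : Add PGame.{u} := ⟨add⟩

instance : Sub PGame := ⟨fun x y => x + -y⟩

def star : PGame.{u} :=
  ⟨PUnit, PUnit, fun _ => 0, fun _ => 0⟩

class inductive Short : PGame.{u} → Type (u + 1)
  | mk :
    ∀ {α β : Type u} {L : α → PGame.{u}} {R : β → PGame.{u}} (_ : ∀ i : α, Short (L i))
      (_ : ∀ j : β, Short (R j)) [Fintype α] [Fintype β], Short ⟨α, β, L, R⟩

end PGame

end SetTheory

open SetTheory

open scoped PGame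

namespace SeqCompound

open Classical in
/-- The sequential compound `G → H` of two pregames. -/
noncomputable def seqc : PGame → PGame → PGame
  | PGame.mk α β L R, H =>
    if Nonempty α then
      if Nonempty β then
        PGame.mk α β (fun a => seqc (L a) H) (fun b => seqc (R b) H)
      else
        PGame.mk α H.RightMoves (fun a => seqc (L a) H) H.moveRight
    else
      if Nonempty β then
        PGame.mk H.LeftMoves β H.moveLeft (fun b => seqc (R b) H)
      else H

/-- A pregame is dicotic (all-small) if in every subposition,
Left has an option iff Right has an option. -/
def Dicotic : PGame → Prop
  | PGame.mk α β L R =>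
    (Nonempty α ↔ Nonempty β) ∧ (∀ a, Dicotic (L a)) ∧ (∀ b, Dicotic (R b))

/-- The canonical nonnegative integer game `{n-1 | }`. -/
def intGame : ℕ → PGame
  | 0 => 0
  | n + 1 => PGame.mk PUnit PEmpty (fun _ => intGame n) PEmpty.elim

/-- `upSum k` is the disjunctive sum `↑¹ + ↑² + ⋯ + ↑ᵏ`. -/
def upSum : ℕ → PGame
  | 0 => 0
  | k + 1 => upSum k +
      PGame.mk PUnit PUnit (fun _ => 0) (fun _ => PGame.star - upSum k)

/-- `upPow k` is the game `↑^(k+1) = {0 | ∗ - (↑¹ + ⋯ + ↑ᵏ)}`. -/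
def upPow (k : ℕ) : PGame :=
  PGame.mk PUnit PUnit (fun _ => 0) (fun _ => PGame.star - upSum k)

/-- Sequential compound of a list of games. -/
noncomputable def seqList : List PGame → PGame
  | [] => 0
  | G :: l => seqc G (seqList l)

end SeqCompound

namespace SetTheory.PGame

theorem Identical.refl : ∀ (x : PGame.{u}), x ≡ x
  | mk _ _ xL xR => by
    rw [Identical]
    exact ⟨⟨fun i => ⟨i, Identical.refl (xL i)⟩, fun j => ⟨j, Identical.refl (xL j)⟩⟩,
      ⟨fun i => ⟨i, Identical.refl (xR i)⟩, fun j => ⟨j, Identical.refl (xR j)⟩⟩⟩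

theorem Identical.of_equiv {x y : PGame.{u}} (l : x.LeftMoves ≃ y.LeftMoves)
    (r : x.RightMoves ≃ y.RightMoves) (hl : ∀ i, x.moveLeft i ≡ y.moveLeft (l i))
    (hr : ∀ i, x.moveRight i ≡ y.moveRight (r i)) : x ≡ y := by
  cases x
  cases y
  rw [Identical]
  refine ⟨⟨fun i => ⟨l i, hl i⟩, fun j => ?_⟩, ⟨fun i => ⟨r i, hr i⟩, fun j => ?_⟩⟩
  · obtain ⟨k, rfl⟩ := l.surjective j
    exact ⟨k, hl k⟩
  · obtain ⟨k, rfl⟩ := r.surjective j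
    exact ⟨k, hr k⟩

end SetTheory.PGame

open SeqCompound in
theorem neg_seqc_aux : ∀ (G H : PGame), -(seqc G H) ≡ seqc (-G) (-H)
  | PGame.mk α β L R, PGame.mk γ δ P Q => by
    show -(seqc (PGame.mk α β L R) (PGame.mk γ δ P Q)) ≡
      seqc (PGame.mk β α (fun b => -R b) (fun a => -L a)) (PGame.mk δ γ (fun j => -Q j) (fun i => -P i))
    rw [seqc, seqc]
    by_cases hα : Nonempty α <;> by_cases hβ : Nonempty β <;>
      simp only [hα, hβ, if_true, if_false, if_pos, if_neg, not_false_iff]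
    · exact .of_equiv (Equiv.refl _) (Equiv.refl _)
        (fun i => neg_seqc_aux (R i) _) (fun i => neg_seqc_aux (L i) _)
    · exact .of_equiv (Equiv.refl _) (Equiv.refl _)
        (fun i => .refl _) (fun i => neg_seqc_aux (L i) _)
    · exact .of_equiv (Equiv.refl _) (Equiv.refl _)
        (fun i => neg_seqc_aux (R i) _) (fun i => .refl _)
    · exact .refl _

open SeqCompound in
/-- negation distributes over the sequential compound. -/
theorem neg_seqc (G H : PGame) [PGame.Short G] [PGame.Short H] :
    -(seqc G H) ≡ seqc (-G) (-H) := by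
  exact neg_seqc_aux G H
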